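/- In a Contains(x) execution of the Simpler Lazy Set algorithm with pseudo-path a₀,…,aₘ, the values satisfy Val(a₀) < Val(a₁) < ⋯ < Val(a_{m-1}) < x ≤ Val(aₘ); in particular every Contains execution traverses only finitely many addresses and terminates. -/
import Mathlib


/-- A state structure of the Simpler Lazy Set algorithm over the address
type `A` with fixed Head address `H` and Tail address `T`: a set of active
addresses, the `next` fields, and the key values (in ℕ ∪ {-1, ∞},
modelled inside `WithTop ℤ`). -/
structure SState (A : Type) (H T : A) where
  Active : Set A
  Next : A → A
  Val : A → WithTop ℤ

variable {A : Type} {H T : A}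

/-- A normal state: H and T are active with values -1 and ∞, only finitely
many addresses are active, other active addresses have values in ℕ, and
`Next` maps an active address (≠ T) to an active address of strictly larger
value. -/
def LSNormal (S : SState A H T) : Prop :=
  H ∈ S.Active ∧ T ∈ S.Active ∧ S.Active.Finite ∧
  S.Val H = ((-1 : ℤ) : WithTop ℤ) ∧ S.Val T = ⊤ ∧
  (∀ a ∈ S.Active, a ≠ H → a ≠ T → ∃ n : ℕ, S.Val a = ((n : ℤ) : WithTop ℤ)) ∧
  (∀ a ∈ S.Active, a ≠ T → S.Next a ∈ S.Active ∧ S.Val a < S.Val (S.Next a))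

/-- `l` is a path (a nonempty `Next`-chain of active addresses, not passing
through T except possibly at the end) from `a` to `b` in state `S`. -/
def LSIsPathFrom (S : SState A H T) (l : List A) (a b : A) : Prop :=
  l ≠ [] ∧ l.head? = some a ∧ l.getLast? = some b ∧
  (∀ x ∈ l, x ∈ S.Active) ∧
  l.Chain' (fun x y => x ≠ T ∧ S.Next x = y)

/-- `b` is reachable from `a` (b is on the path from a towards Tail). -/
def LSReaches (S : SState A H T) (a b : A) : Prop :=
  ∃ l : List A, LSIsPathFrom S l a b

/-- `a` is on the main branch (the path from Head to Tail). -/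
def LSOnMain (S : SState A H T) (a : A) : Prop :=
  LSReaches S H a

/-- A stuttering step: nothing observable changes (invocations, responses,
reads, failed operations, Add¹ and Rem⁰ actions). -/
def LSIsStutter (S1 S2 : SState A H T) : Prop :=
  S1.Active = S2.Active ∧ S1.Next = S2.Next ∧ S1.Val = S2.Val

/-- An Add⁰ step: a fresh address `a` of value `x` is activated and spliced
into the main branch after `p`. -/
def LSIsAddStep (S1 S2 : SState A H T) : Prop :=
  ∃ (x : ℕ) (a p : A), a ∉ S1.Active ∧ p ∈ S1.Active ∧ p ≠ T ∧
    LSOnMain S1 p ∧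
    S1.Val p < ((x : ℤ) : WithTop ℤ) ∧
    ((x : ℤ) : WithTop ℤ) < S1.Val (S1.Next p) ∧
    S2.Active = insert a S1.Active ∧
    (∀ y, y ≠ a → S2.Val y = S1.Val y) ∧ S2.Val a = ((x : ℤ) : WithTop ℤ) ∧
    (∀ y, y ≠ a → y ≠ p → S2.Next y = S1.Next y) ∧
    S2.Next p = a ∧ S2.Next a = S1.Next p

/-- A Rem¹ step: the main-branch address `d` is physically removed by
redirecting the `Next` pointer of its main-branch predecessor `c`. -/
def LSIsRemStep (S1 S2 : SState A H T) : Prop :=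
  ∃ c d : A, c ∈ S1.Active ∧ d ∈ S1.Active ∧ c ≠ T ∧ d ≠ T ∧ d ≠ H ∧
    S1.Next c = d ∧ LSOnMain S1 c ∧ LSOnMain S1 d ∧
    S2.Active = S1.Active ∧ S2.Val = S1.Val ∧
    (∀ y, y ≠ c → S2.Next y = S1.Next y) ∧ S2.Next c = S1.Next d

/-- An execution triple of the Simpler Lazy Set algorithm. -/
def LSStep (S1 S2 : SState A H T) : Prop :=
  LSIsStutter S1 S2 ∨ LSIsAddStep S1 S2 ∨ LSIsRemStep S1 S2

lemma LSstep_mono {S1 S2 : SState A H T} (h : LSStep S1 S2) :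
    ∀ b ∈ S1.Active, b ∈ S2.Active ∧ S2.Val b = S1.Val b := by
  rintro b hb
  rcases h with ⟨hA, hN, hV⟩ |
    ⟨x, aa, p, ha, _, _, _, _, _, hA, hV, _⟩ |
    ⟨c, d, _, _, _, _, _, _, _, _, hA, hV, _⟩
  · exact ⟨hA ▸ hb, by rw [hV]⟩
  · exact ⟨hA ▸ Set.mem_insert_of_mem _ hb, hV b (by rintro rfl; exact ha hb)⟩
  · exact ⟨hA ▸ hb, by rw [hV]⟩

lemma LSpersist (Ss : ℕ → SState A H T) (hstep : ∀ i, LSStep (Ss i) (Ss (i + 1)))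
    {i i' : ℕ} (h : i ≤ i') :
    ∀ b ∈ (Ss i).Active, b ∈ (Ss i').Active ∧ (Ss i').Val b = (Ss i).Val b := by
  induction i', h using Nat.le_induction with
  | base => exact fun b hb => ⟨hb, rfl⟩
  | succ n hn ih =>
    intro b hb
    obtain ⟨h1, h2⟩ := ih b hb
    obtain ⟨h3, h4⟩ := LSstep_mono (hstep n) b h1
    exact ⟨h3, h4.trans h2⟩

/-- In a Contains(x) execution of the Simpler Lazy Set
algorithm with pseudo-path a₀, …, aₘ (recorded in the states S_{j₀}, …,
S_{jₘ} where the successive assignments to curr happen), the values satisfy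
Val(a₀) < Val(a₁) < ⋯ < Val(a_{m-1}) < x ≤ Val(aₘ); in particular the
traversal visits pairwise distinct addresses, i.e. only finitely many. -/
theorem stmt18 (Ss : ℕ → SState A H T)
    (hnorm : ∀ i, LSNormal (Ss i))
    (hstep : ∀ i, LSStep (Ss i) (Ss (i + 1)))
    (x m : ℕ) (a : ℕ → A) (j : ℕ → ℕ)
    (hj : ∀ k l, k < l → l ≤ m → j k < j l)
    (ha0 : a 0 = H)
    (hact : ∀ k ≤ m, a k ∈ (Ss (j k)).Active)
    (hsucc : ∀ k < m, a (k + 1) = (Ss (j (k + 1))).Next (a k))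
    (hloop : ∀ k < m, (Ss (j k)).Val (a k) < ((x : ℤ) : WithTop ℤ))
    (hstop : ((x : ℤ) : WithTop ℤ) ≤ (Ss (j m)).Val (a m)) :
    (∀ k l, k < l → l ≤ m → (Ss (j m)).Val (a k) < (Ss (j m)).Val (a l)) ∧
    (∀ k < m, (Ss (j m)).Val (a k) < ((x : ℤ) : WithTop ℤ)) ∧
    ((x : ℤ) : WithTop ℤ) ≤ (Ss (j m)).Val (a m) ∧
    (∀ k l, k ≤ m → l ≤ m → a k = a l → k = l) := by
  -- j k ≤ j m for k ≤ m
  have hjle : ∀ k ≤ m, j k ≤ j m := by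
    intro k hk
    rcases eq_or_lt_of_le hk with rfl | h
    · exact le_rfl
    · exact (hj k m h le_rfl).le
  -- value at j m equals value at j k
  have valeq : ∀ k ≤ m, (Ss (j m)).Val (a k) = (Ss (j k)).Val (a k) := by
    intro k hk
    exact (LSpersist Ss hstep (hjle k hk) (a k) (hact k hk)).2
  have stepV : ∀ k < m, (Ss (j m)).Val (a k) < (Ss (j m)).Val (a (k + 1)) := by
    intro k hk
    have hk1 : k + 1 ≤ m := hk
    have hjk : j k ≤ j (k + 1) := (hj k (k + 1) (Nat.lt_succ_self k) hk1).le
    obtain ⟨hact', hval'⟩ := LSpersist Ss hstep hjk (a k) (hact k hk.le)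
    have hnT : a k ≠ T := fun hT => by
      have hvT := (hnorm (j k)).2.2.2.2.1
      have h2 := hloop k hk
      rw [hT, hvT] at h2
      exact not_top_lt h2
    obtain ⟨_, hlt⟩ := (hnorm (j (k + 1))).2.2.2.2.2.2 (a k) hact' hnT
    rw [← hsucc k hk] at hlt
    calc (Ss (j m)).Val (a k) = (Ss (j (k + 1))).Val (a k) := by
          rw [valeq k hk.le, ← hval']
      _ < (Ss (j (k + 1))).Val (a (k + 1)) := hlt
      _ = (Ss (j m)).Val (a (k + 1)) := (valeq (k + 1) hk1).symm
  have chain : ∀ k l, k < l → l ≤ m → (Ss (j m)).Val (a k) < (Ss (j m)).Val (a l) := by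
    intro k l hkl hlm
    induction l with
    | zero => omega
    | succ n ih =>
      rcases Nat.lt_or_ge k n with h | h
      · exact lt_trans (ih h (by omega)) (stepV n (by omega))
      · have : k = n := by omega
        subst this; exact stepV k (by omega)
  refine ⟨chain, ?_, hstop, ?_⟩
  · intro k hk
    rw [valeq k hk.le]
    exact hloop k hk
  · intro k l hk hl heq
    by_contra hne
    rcases Nat.lt_or_ge k l with h | h
    · have := chain k l h hl
      rw [heq] at this
      exact lt_irrefl _ this
    · have h' : l < k := by omega
      have := chain l k h' hk
      rw [heq] at this
      exact lt_irrefl _ this
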